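/- The ideal generated by F_1 in k[X_i, Y_{ij} : 0 ≤ i ≤ m−1, 1 ≤ j ≤ n−1] is a radical ideal. -/

import Mathlib

open MvPolynomial

open Fin.NatCast in
/-- The ideal generated by
`F₁ = F ∪ {X_i^q - Y_{i1}, Y_{i1}^q - Y_{i2}, …, Y_{i,n-1}^q - X_i}` in
`k[X_i, Y_{ij}]` is a radical ideal, where `k = F_{q^n}`.  (The variables are indexed by
`Fin m × Fin n`, with `X_i = (i,0)`, `Y_{ij} = (i,j)`, and the cyclic relations
`Z_{ij}^q - Z_{i,j+1 mod n}`.) -/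
theorem ideal_span_F1_isRadical
    {k' k : Type} [Field k'] [Fintype k'] [Field k] [Algebra k' k]
    (q n m : ℕ) (hq : q = Fintype.card k') (hn : 0 < n)
    (α : Module.Basis (Fin n) k' k)
    (F : Finset (MvPolynomial (Fin m) k))
    (F1 : Set (MvPolynomial (Fin m × Fin n) k))
    (hF1 : F1 =
      (MvPolynomial.rename fun i : Fin m => (i, (⟨0, hn⟩ : Fin n))) '' ↑F ∪
      Set.range (fun p : Fin m × Fin n =>
        X p ^ q - X (p.1, p.2 + ⟨1 % n, Nat.mod_lt 1 hn⟩))) :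
    (Ideal.span F1).IsRadical := by
  haveI : NeZero n := ⟨hn.ne'⟩
  haveI : Fintype k := Module.fintypeOfFintype α
  set p := ringChar k' with hp
  obtain ⟨e, hpp, he⟩ := FiniteField.card k' p
  haveI : Fact p.Prime := ⟨hpp⟩
  haveI : CharP k p := charP_of_injective_algebraMap (algebraMap k' k).injective p
  set I := Ideal.span F1 with hI
  have hqe : q = p ^ (e : ℕ) := by rw [hq, he]
  have hq1 : 1 < q := hq ▸ Fintype.one_lt_card
  have hcard : Fintype.card k = q ^ n := by
    rw [Module.card_fintype α, hq, Fintype.card_fin]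
  -- raising a member of I to the q-th power stays in I, and Frobenius is additive
  have hfrob : ∀ a b : MvPolynomial (Fin m × Fin n) k, a - b ∈ I → a ^ q - b ^ q ∈ I := by
    intro a b hab
    have : a ^ q - b ^ q = (a - b) ^ q := by rw [hqe, sub_pow_char_pow]
    rw [this]
    exact I.pow_mem_of_mem hab q (by omega)
  have hone : (⟨1 % n, Nat.mod_lt 1 hn⟩ : Fin n) = 1 := by
    ext; simp [Fin.val_one']
  have hvar : ∀ r : Fin m × Fin n, (X r : MvPolynomial (Fin m × Fin n) k) ^ q - X (r.1, r.2 + 1) ∈ I := by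
    intro r
    rw [← hone]
    exact Ideal.subset_span (by rw [hF1]; exact Set.mem_union_right _ ⟨r, rfl⟩)
  -- X r ^ q ^ j ≡ X (r.1, r.2 + j) mod I
  have hpow : ∀ (j : ℕ) (r : Fin m × Fin n),
      (X r : MvPolynomial (Fin m × Fin n) k) ^ q ^ j - X (r.1, r.2 + (j : Fin n)) ∈ I := by
    intro j
    induction j with
    | zero => intro r; simp
    | succ j ih =>
      intro r
      have h1 : ((X r : MvPolynomial (Fin m × Fin n) k) ^ q ^ j) ^ q - (X (r.1, r.2 + (j : Fin n)) : MvPolynomial (Fin m × Fin n) k) ^ q ∈ I :=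
        hfrob _ _ (ih r)
      have h2 := hvar (r.1, r.2 + (j : Fin n))
      have key : (X r : MvPolynomial (Fin m × Fin n) k) ^ q ^ (j + 1) - X (r.1, r.2 + ((j : ℕ) + 1 : Fin n)) =
          (((X r : MvPolynomial (Fin m × Fin n) k) ^ q ^ j) ^ q - (X (r.1, r.2 + (j : Fin n)) : MvPolynomial (Fin m × Fin n) k) ^ q)
          + ((X (r.1, r.2 + (j : Fin n)) : MvPolynomial (Fin m × Fin n) k) ^ q - X (r.1, r.2 + (j : Fin n) + 1)) := by
        rw [pow_succ, pow_mul]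
        ring_nf
        rw [add_assoc]
      push_cast
      rw [key]
      exact I.add_mem h1 h2
  have hX : ∀ r : Fin m × Fin n, (X r : MvPolynomial (Fin m × Fin n) k) ^ q ^ n - X r ∈ I := by
    intro r
    have := hpow n r
    rwa [Fin.natCast_self, add_zero] at this
  -- main: f ^ q ^ n ≡ f mod I for every f
  have main : ∀ f : MvPolynomial (Fin m × Fin n) k, f ^ q ^ n - f ∈ I := by
    intro f
    induction f using MvPolynomial.induction_on with
    | C a =>
      have : a ^ q ^ n = a := by rw [← hcard]; exact FiniteField.pow_card a
      rw [← C_pow, this, sub_self]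
      exact I.zero_mem
    | add f g hf hg =>
      have : (f + g) ^ q ^ n = f ^ q ^ n + g ^ q ^ n := by
        rw [hqe, ← pow_mul, add_pow_char_pow]
      rw [this]
      have : f ^ q ^ n + g ^ q ^ n - (f + g) = (f ^ q ^ n - f) + (g ^ q ^ n - g) := by ring
      rw [this]
      exact I.add_mem hf hg
    | mul_X f r hf =>
      have key : (f * X r) ^ q ^ n - f * X r =
          f ^ q ^ n * ((X r : MvPolynomial (Fin m × Fin n) k) ^ q ^ n - X r) + X r * (f ^ q ^ n - f) := by
        rw [mul_pow]; ring
      rw [key]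
      exact I.add_mem (I.mul_mem_left _ (hX r)) (I.mul_mem_left _ hf)
  rw [Ideal.isRadical_iff_pow_one_lt (q ^ n) (Nat.one_lt_pow hn.ne' hq1)]
  intro r hr
  have : r = r ^ q ^ n - (r ^ q ^ n - r) := by ring
  rw [this]
  exact I.sub_mem hr (main r)
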